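/- For every k = 0, …, e−1 one has b₁^{(k)}·m₂^{(k)}(1) = b₂^{(k)}·m₁^{(k)}(2). -/

import Mathlib

/-- The data of a reduced irreducible quasi-ordinary prototype surface branch
`ζ = Σ_{j=1}^e x₁^{λ_{1,j}} x₂^{λ_{2,j}}` together with, for each choice `i ∈ {1,2}`
of the recursion, the derived exponent sequences `λ^{(k)}_{u,j}(i)`, the lowest-terms
representations `λ^{(k)}_{u,1}(i) = n_u^{(k)}(i) / m_u^{(k)}(i)` of the leading
exponents, and the minimal nonnegative integers `r_i^{(k)}, s_i^{(k)}` with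
`m_ĩ^{(k)}(i)·s_i^{(k)} − n_ĩ^{(k)}(i)·r_i^{(k)} = 1`.

The `Bool` index `false` corresponds to the index `1` of the paper and `true` to `2`;
for an index `i`, the other index `ĩ` is `!i`. -/
structure QOData where
  /-- the number `e ≥ 1` of characteristic terms -/
  e : ℕ
  he : 1 ≤ e
  /-- the characteristic exponents `λ_{u,j}` for `u ∈ {1,2}`, `j = 1,…,e` -/
  lam0 : Bool → ℕ → ℚ
  /-- the derived exponents `λ^{(k)}_{u,j}(i)`; the arguments are, in order, `i u k j`,
  with `k = 0,…,e−1` and `j = 1,…,e−k` -/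
  lam : Bool → Bool → ℕ → ℕ → ℚ
  /-- the numerators `n_u^{(k)}(i)`; the arguments are, in order, `i u k` -/
  n : Bool → Bool → ℕ → ℤ
  /-- the denominators `m_u^{(k)}(i) ≥ 1`; the arguments are, in order, `i u k` -/
  m : Bool → Bool → ℕ → ℕ
  /-- `r_i^{(k)}`; the arguments are, in order, `i k` -/
  r : Bool → ℕ → ℕ
  /-- `s_i^{(k)}`; the arguments are, in order, `i k` -/
  s : Bool → ℕ → ℕ
  /-- the leading exponents are positive -/
  pos : ∀ u, 0 < lam0 u 1
  /-- the exponents are nondecreasing in `j` -/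
  mono : ∀ u j, 1 ≤ j → j < e → lam0 u j ≤ lam0 u (j + 1)
  /-- each characteristic pair is essential: it does not lie in the subgroup of `ℚ²`
  generated by `ℤ²` together with the earlier pairs -/
  essential : ∀ j, 1 ≤ j → j ≤ e →
    (lam0 false j, lam0 true j) ∉
      AddSubgroup.closure
        ((Set.range fun p : ℤ × ℤ => ((p.1 : ℚ), (p.2 : ℚ))) ∪
          {q : ℚ × ℚ | ∃ l, 1 ≤ l ∧ l < j ∧ q = (lam0 false l, lam0 true l)})
  /-- `λ^{(0)}_{u,j}(i) = λ_{u,j}` -/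
  base : ∀ i u j, lam i u 0 j = lam0 u j
  /-- the denominators are at least 1 -/
  m_pos : ∀ i u k, k ≤ e - 1 → 1 ≤ m i u k
  /-- the leading exponents are written in lowest terms -/
  cop : ∀ i u k, k ≤ e - 1 → Int.gcd (n i u k) (m i u k : ℤ) = 1
  /-- `λ^{(k)}_{u,1}(i) = n_u^{(k)}(i) / m_u^{(k)}(i)` -/
  lead : ∀ i u k, k ≤ e - 1 → lam i u k 1 = (n i u k : ℚ) / (m i u k : ℚ)
  /-- `m_ĩ^{(k)}(i)·s_i^{(k)} − n_ĩ^{(k)}(i)·r_i^{(k)} = 1` -/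
  rs_det : ∀ i k, k ≤ e - 1 →
    (m i (!i) k : ℤ) * (s i k : ℤ) - n i (!i) k * (r i k : ℤ) = 1
  /-- `r_i^{(k)}` and `s_i^{(k)}` are the smallest nonnegative integers satisfying
  the determinant condition -/
  rs_min : ∀ i k, k ≤ e - 1 → ∀ r' s' : ℕ,
    (m i (!i) k : ℤ) * (s' : ℤ) - n i (!i) k * (r' : ℤ) = 1 → r i k ≤ r' ∧ s i k ≤ s'
  /-- the recursion for `λ^{(k+1)}_{ĩ,j}(i)`, where `d_•^{(k)}(i) = lcm(m₁^{(k)}(i), m₂^{(k)}(i))` -/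
  rec_other : ∀ i k j, k + 1 ≤ e - 1 → 1 ≤ j → j ≤ e - (k + 1) →
    lam i (!i) (k + 1) j =
      (m i (!i) k : ℚ) *
        (lam i (!i) k (j + 1) - lam i (!i) k 1 +
          (Nat.lcm (m i false k) (m i true k) : ℚ) * lam i (!i) k 1)
  /-- the recursion for `λ^{(k+1)}_{i,j}(i)`, where
  `b_i^{(k)} = d_•^{(k)}(i) / m_ĩ^{(k)}(i)` -/
  rec_self : ∀ i k j, k + 1 ≤ e - 1 → 1 ≤ j → j ≤ e - (k + 1) →
    lam i i (k + 1) j =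
      ((Nat.lcm (m i false k) (m i true k) / m i (!i) k : ℕ) : ℚ) *
        (lam i i k (j + 1) - lam i i k 1 +
          (Nat.lcm (m i false k) (m i true k) : ℚ) * lam i i k 1) +
      ((Nat.lcm (m i false k) (m i true k) / m i (!i) k : ℕ) : ℚ) * (r i k : ℚ) *
        lam i i k 1 * lam i (!i) (k + 1) j

namespace QOData

variable (D : QOData)

/-- `d_•^{(k)}(i) = lcm(m₁^{(k)}(i), m₂^{(k)}(i))` -/
def dd (i : Bool) (k : ℕ) : ℕ := Nat.lcm (D.m i false k) (D.m i true k)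

/-- `b_i^{(k)} = d_•^{(k)}(i) / m_ĩ^{(k)}(i)` -/
def b (i : Bool) (k : ℕ) : ℕ := D.dd i k / D.m i (!i) k

/-- `c_•^{(k)}(i) = gcd(n₁^{(k)}(i), n₂^{(k)}(i))` -/
def c (i : Bool) (k : ℕ) : ℕ := Int.gcd (D.n i false k) (D.n i true k)

/-- `d^{(k)}(i) = ∏_{l=k}^{e−1} d_•^{(l)}(i)`, the degree of the `k`-th derived surface -/
def dTot (i : Bool) (k : ℕ) : ℕ := ∏ l ∈ Finset.Ico k D.e, D.dd i l

end QOData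


namespace BMAux

def Z2 : AddSubgroup (Bool → ℚ) where
  carrier := {x | ∀ u, ∃ a : ℤ, x u = (a : ℚ)}
  zero_mem' := fun u => ⟨0, by simp⟩
  add_mem' := by
    intro x y hx hy u
    obtain ⟨a, ha⟩ := hx u; obtain ⟨b, hb⟩ := hy u
    exact ⟨a + b, by simp [Pi.add_apply, ha, hb]⟩
  neg_mem' := by
    intro x hx u
    obtain ⟨a, ha⟩ := hx u
    exact ⟨-a, by simp [Pi.neg_apply, ha]⟩

abbrev V := (Bool → ℚ) ⧸ Z2

def pi : (Bool → ℚ) →+ V := QuotientAddGroup.mk' Z2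

lemma pi_eq_iff {x y : Bool → ℚ} : pi x = pi y ↔ x - y ∈ Z2 :=
  QuotientAddGroup.eq_iff_sub_mem

lemma pi_eq_zero_iff {x : Bool → ℚ} : pi x = 0 ↔ x ∈ Z2 :=
  QuotientAddGroup.eq_zero_iff x

lemma int_mul_int (q : ℚ) {n : ℕ} (h : q.den ∣ n) : ∃ a : ℤ, (n : ℚ) * q = (a : ℚ) := by
  obtain ⟨c, hc⟩ := h
  refine ⟨c * q.num, ?_⟩
  have hden : (q.den : ℚ) ≠ 0 := by exact_mod_cast q.den_ne_zero
  have hq : (q.num : ℚ) = q * q.den := (div_eq_iff hden).mp (Rat.num_div_den q)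
  push_cast
  rw [hc, hq]; push_cast; ring

lemma den_dvd_of_int_mul {q : ℚ} {n : ℕ} {a : ℤ} (h : (n : ℚ) * q = (a : ℚ)) : q.den ∣ n := by
  have hden : (q.den : ℚ) ≠ 0 := by exact_mod_cast q.den_ne_zero
  have h2 : (n : ℤ) * q.num = a * (q.den : ℤ) := by
    have := congrArg (fun t => t * (q.den : ℚ)) h
    have hq : (q.num : ℚ) = q * q.den := (div_eq_iff hden).mp (Rat.num_div_den q)
    exact_mod_cast (by rw [mul_assoc, ← hq] at this; exact_mod_cast this)
  have h3 : (q.den : ℤ) ∣ (n : ℤ) * q.num := Dvd.intro a (by linarith [h2])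
  have h4 : q.den ∣ n * q.num.natAbs := by
    have := Int.natAbs_dvd_natAbs.mpr h3
    simpa [Int.natAbs_mul] using this
  exact (Nat.Coprime.dvd_of_dvd_mul_right (q.reduced.symm) h4)

lemma addOrderOf_pi (x : Bool → ℚ) :
    addOrderOf (pi x) = Nat.lcm (x false).den (x true).den := by
  set L := Nat.lcm (x false).den (x true).den with hL
  have key : ∀ n : ℕ, n • pi x = 0 ↔ L ∣ n := by
    intro n
    rw [← map_nsmul, pi_eq_zero_iff]
    constructor
    · intro h
      have h1 := h false
      have h2 := h true
      simp only [Pi.smul_apply, nsmul_eq_mul] at h1 h2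
      obtain ⟨a, ha⟩ := h1
      obtain ⟨b, hb⟩ := h2
      exact Nat.lcm_dvd (den_dvd_of_int_mul ha) (den_dvd_of_int_mul hb)
    · intro h u
      have : (x u).den ∣ n := by
        refine dvd_trans ?_ h
        cases u
        · exact Nat.dvd_lcm_left _ _
        · exact Nat.dvd_lcm_right _ _
      simpa [Pi.smul_apply, nsmul_eq_mul] using int_mul_int (x u) this
  have h1 : addOrderOf (pi x) ∣ L := by
    rw [addOrderOf_dvd_iff_nsmul_eq_zero]; exact (key L).mpr dvd_rfl
  have h2 : L ∣ addOrderOf (pi x) := (key _).mp (addOrderOf_nsmul_eq_zero _)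
  exact Nat.dvd_antisymm h1 h2

lemma isTorsion : AddMonoid.IsTorsion V := by
  intro v
  induction v using QuotientAddGroup.induction_on with
  | H x =>
    rw [← addOrderOf_pos_iff]
    show 0 < addOrderOf (pi x)
    rw [addOrderOf_pi]
    exact Nat.pos_of_ne_zero (Nat.lcm_ne_zero (x false).den_ne_zero (x true).den_ne_zero)

lemma den_num_div {n : ℤ} {m : ℕ} (hm : 0 < m) (h : Int.gcd n (m : ℤ) = 1) :
    ((n : ℚ) / (m : ℚ)).den = m ∧ ((n : ℚ) / (m : ℚ)).num = n := by
  have hred : n.natAbs.Coprime m := by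
    simpa [Int.gcd] using h
  have : ((n : ℚ) / (m : ℚ)) = Rat.mk' n m (by omega) hred := by
    rw [Rat.mk_eq_divInt, Rat.divInt_eq_div]; norm_num
  rw [this]
  exact ⟨rfl, rfl⟩

def lmap (c1 c2 : Bool → ℚ) : (Bool → ℚ) →+ (Bool → ℚ) where
  toFun x := fun u => c1 u * x u + c2 u * x (!u)
  map_zero' := by funext u; simp
  map_add' x y := by funext u; simp only [Pi.add_apply]; ring

lemma lmap_apply (c1 c2 x u) : lmap c1 c2 x u = c1 u * x u + c2 u * x (!u) := rfl

lemma lmap_mem_Z2 {c1 c2 : Bool → ℚ} (h1 : ∀ u, ∃ a : ℤ, c1 u = (a : ℚ))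
    (h2 : ∀ u, ∃ a : ℤ, c2 u = (a : ℚ)) {x : Bool → ℚ} (hx : x ∈ Z2) :
    lmap c1 c2 x ∈ Z2 := by
  intro u
  obtain ⟨a, ha⟩ := h1 u
  obtain ⟨b, hb⟩ := h2 u
  obtain ⟨p, hp⟩ := hx u
  obtain ⟨q, hq⟩ := hx (!u)
  exact ⟨a * p + b * q, by rw [lmap_apply, ha, hb, hp, hq]; push_cast; ring⟩

def lbar (c1 c2 : Bool → ℚ) (h1 : ∀ u, ∃ a : ℤ, c1 u = (a : ℚ))
    (h2 : ∀ u, ∃ a : ℤ, c2 u = (a : ℚ)) : V →+ V :=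
  QuotientAddGroup.map Z2 Z2 (lmap c1 c2) (fun _ hx => lmap_mem_Z2 h1 h2 hx)

lemma lbar_pi (c1 c2 h1 h2) (x : Bool → ℚ) :
    lbar c1 c2 h1 h2 (pi x) = pi (lmap c1 c2 x) := rfl

lemma bool_eq_or (u i : Bool) : u = i ∨ u = !i := by revert u i; decide

lemma mem_Z2_of (i : Bool) (x : Bool → ℚ) (hi : ∃ a : ℤ, x i = (a : ℚ))
    (hni : ∃ a : ℤ, x (!i) = (a : ℚ)) : x ∈ Z2 := by
  intro u
  rcases bool_eq_or u i with h | h <;> subst h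
  · exact hi
  · exact hni

end BMAux
namespace BMAux

variable (D : QOData)

def lamv (i : Bool) (k j : ℕ) : Bool → ℚ := fun u => D.lam i u k j

def gg (i : Bool) (k j : ℕ) : V := pi (lamv D i k j)

def Gr (i : Bool) (k j : ℕ) : AddSubgroup V :=
  AddSubgroup.closure ((fun l => gg D i k l) '' Set.Icc 1 j)

lemma m_dvd_dd (i u : Bool) (k : ℕ) : D.m i u k ∣ D.dd i k := by
  cases u
  · exact Nat.dvd_lcm_left _ _
  · exact Nat.dvd_lcm_right _ _

lemma dd_pos (i : Bool) (k : ℕ) (hk : k ≤ D.e - 1) : 0 < D.dd i k := by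
  have h1 := D.m_pos i false k hk
  have h2 := D.m_pos i true k hk
  exact Nat.pos_of_ne_zero (Nat.lcm_ne_zero (by omega) (by omega))

lemma b_mul_m (i : Bool) (k : ℕ) : D.b i k * D.m i (!i) k = D.dd i k :=
  Nat.div_mul_cancel (m_dvd_dd D i (!i) k)

lemma lam_den (i u : Bool) (k : ℕ) (hk : k ≤ D.e - 1) :
    (D.lam i u k 1).den = D.m i u k := by
  rw [D.lead i u k hk]
  exact (den_num_div (by have := D.m_pos i u k hk; omega) (D.cop i u k hk)).1

lemma lam_num (i u : Bool) (k : ℕ) (hk : k ≤ D.e - 1) :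
    (D.lam i u k 1).num = D.n i u k := by
  rw [D.lead i u k hk]
  exact (den_num_div (by have := D.m_pos i u k hk; omega) (D.cop i u k hk)).2

lemma addOrderOf_gg (i : Bool) (k : ℕ) (hk : k ≤ D.e - 1) :
    addOrderOf (gg D i k 1) = D.dd i k := by
  rw [gg, addOrderOf_pi]
  show Nat.lcm (D.lam i false k 1).den (D.lam i true k 1).den = _
  rw [lam_den D i false k hk, lam_den D i true k hk]
  rfl

lemma Gr_one (i : Bool) (k : ℕ) :
    Gr D i k 1 = AddSubgroup.zmultiples (gg D i k 1) := by
  rw [Gr, Set.Icc_self, Set.image_singleton, AddSubgroup.zmultiples_eq_closure]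

lemma card_Gr_one (i : Bool) (k : ℕ) (hk : k ≤ D.e - 1) :
    Nat.card (Gr D i k 1) = D.dd i k := by
  rw [Gr_one, Nat.card_zmultiples, addOrderOf_gg D i k hk]

/-- the integer `T = (d/m_i)·r·n_i` -/
def TT (i : Bool) (k : ℕ) : ℤ :=
  ((D.dd i k / D.m i i k : ℕ) : ℤ) * (D.r i k : ℤ) * D.n i i k

def cc1 (i : Bool) (k : ℕ) : Bool → ℚ :=
  fun u => if u = i then (D.b i k : ℚ) else (D.m i (!i) k : ℚ)

def cc2 (i : Bool) (k : ℕ) : Bool → ℚ :=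
  fun u => if u = i then (TT D i k : ℚ) else 0

lemma cc1_int (i : Bool) (k : ℕ) : ∀ u, ∃ a : ℤ, cc1 D i k u = (a : ℚ) := by
  intro u
  unfold cc1
  split_ifs
  · exact ⟨D.b i k, by push_cast; ring⟩
  · exact ⟨D.m i (!i) k, by push_cast; ring⟩

lemma cc2_int (i : Bool) (k : ℕ) : ∀ u, ∃ a : ℤ, cc2 D i k u = (a : ℚ) := by
  intro u
  unfold cc2
  split_ifs
  · exact ⟨TT D i k, rfl⟩
  · exact ⟨0, by norm_num⟩

def Fbar (i : Bool) (k : ℕ) : V →+ V :=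
  lbar (cc1 D i k) (cc2 D i k) (cc1_int D i k) (cc2_int D i k)

lemma Fbar_pi (i : Bool) (k : ℕ) (x : Bool → ℚ) :
    Fbar D i k (pi x) = pi (lmap (cc1 D i k) (cc2 D i k) x) := rfl

lemma lmap_at_self (i : Bool) (k : ℕ) (x : Bool → ℚ) :
    lmap (cc1 D i k) (cc2 D i k) x i = (D.b i k : ℚ) * x i + (TT D i k : ℚ) * x (!i) := by
  rw [lmap_apply]
  simp [cc1, cc2]

lemma lmap_at_other (i : Bool) (k : ℕ) (x : Bool → ℚ) :
    lmap (cc1 D i k) (cc2 D i k) x (!i) = (D.m i (!i) k : ℚ) * x (!i) := by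
  rw [lmap_apply]
  simp [cc1, cc2, Bool.not_ne_self]

lemma casts (i : Bool) (k : ℕ) (hk : k ≤ D.e - 1) :
    (D.m i i k : ℚ) ≠ 0 ∧ (D.m i (!i) k : ℚ) ≠ 0 ∧
    (D.b i k : ℚ) * (D.m i (!i) k : ℚ) = (D.dd i k : ℚ) ∧
    ((D.dd i k / D.m i i k : ℕ) : ℚ) * (D.m i i k : ℚ) = (D.dd i k : ℚ) ∧
    (D.m i (!i) k : ℚ) * (D.s i k : ℚ) - (D.n i (!i) k : ℚ) * (D.r i k : ℚ) = 1 := by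
  have h1 := D.m_pos i i k hk
  have h2 := D.m_pos i (!i) k hk
  refine ⟨Nat.cast_ne_zero.mpr (by omega), Nat.cast_ne_zero.mpr (by omega), ?_, ?_, ?_⟩
  · exact_mod_cast congrArg (Nat.cast : ℕ → ℚ) (b_mul_m D i k)
  · exact_mod_cast congrArg (Nat.cast : ℕ → ℚ) (Nat.div_mul_cancel (m_dvd_dd D i i k))
  · exact_mod_cast congrArg (Int.cast : ℤ → ℚ) (D.rs_det i k hk)

/-- the fundamental rational identity -/
lemma id1 (i : Bool) (k : ℕ) (hk : k ≤ D.e - 1) :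
    (D.b i k : ℚ) * ((D.n i i k : ℚ) / (D.m i i k : ℚ)) +
      (TT D i k : ℚ) * ((D.n i (!i) k : ℚ) / (D.m i (!i) k : ℚ)) =
      ((D.s i k : ℤ) * D.n i i k * ((D.dd i k / D.m i i k : ℕ) : ℤ) : ℤ) := by
  obtain ⟨hM1, hM2, hbM, hq1, hrs⟩ := casts D i k hk
  rw [TT]
  set Q : ℕ := D.dd i k / D.m i i k with hQ
  push_cast
  field_simp
  linear_combination ((D.n i i k : ℚ))*hbM + ((D.r i k :ℚ)*(D.n i i k)*(D.n i (!i) k) - (D.s i k :ℚ)*(D.n i i k)*(D.m i (!i) k))*hq1 - ((D.n i i k : ℚ)*(D.dd i k))*hrs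

lemma F_lam1_mem (i : Bool) (k : ℕ) (hk : k ≤ D.e - 1) :
    lmap (cc1 D i k) (cc2 D i k) (lamv D i k 1) ∈ Z2 := by
  refine mem_Z2_of i _ ?_ ?_
  · refine ⟨(D.s i k : ℤ) * D.n i i k * ((D.dd i k / D.m i i k : ℕ) : ℤ), ?_⟩
    rw [lmap_at_self]
    show (D.b i k : ℚ) * D.lam i i k 1 + (TT D i k : ℚ) * D.lam i (!i) k 1 = _
    rw [D.lead i i k hk, D.lead i (!i) k hk]
    exact id1 D i k hk
  · refine ⟨D.n i (!i) k, ?_⟩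
    rw [lmap_at_other]
    show (D.m i (!i) k : ℚ) * D.lam i (!i) k 1 = _
    rw [D.lead i (!i) k hk]
    have hm : (D.m i (!i) k : ℚ) ≠ 0 := by
      have := D.m_pos i (!i) k hk
      exact_mod_cast by positivity
    field_simp

lemma Fbar_g1_zero (i : Bool) (k : ℕ) (hk : k ≤ D.e - 1) :
    Fbar D i k (gg D i k 1) = 0 := by
  rw [gg, Fbar_pi, pi_eq_zero_iff]
  exact F_lam1_mem D i k hk

end BMAux

namespace BMAux
lemma gg_rec' (D : QOData) (i : Bool) (k j : ℕ) (hk1 : k + 1 ≤ D.e - 1) (hj : 1 ≤ j)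
    (hj2 : j ≤ D.e - (k + 1)) :
    gg D i (k + 1) j = Fbar D i k (gg D i k (j + 1)) := by
  have hk : k ≤ D.e - 1 := by omega
  obtain ⟨hM1, hM2, hbM, hq1, hrs⟩ := casts D i k hk
  have h4 : (D.m i i k : ℚ) * D.lam i i k 1 = (D.n i i k : ℚ) := by
    rw [D.lead i i k hk]; field_simp
  have h5 : (D.m i (!i) k : ℚ) * D.lam i (!i) k 1 = (D.n i (!i) k : ℚ) := by
    rw [D.lead i (!i) k hk]; field_simp
  rw [gg, gg, Fbar_pi]
  refine pi_eq_iff.mpr (mem_Z2_of i _ ?_ ?_)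
  · refine ⟨((D.dd i k / D.m i i k : ℕ) : ℤ) * ((D.dd i k : ℤ) - 1) * (D.s i k) * (D.n i i k), ?_⟩
    have e0 : (lamv D i (k + 1) j - lmap (cc1 D i k) (cc2 D i k) (lamv D i k (j + 1))) i
        = D.lam i i (k+1) j -
          ((D.b i k : ℚ) * D.lam i i k (j+1) + (TT D i k : ℚ) * D.lam i (!i) k (j+1)) := by
      rw [Pi.sub_apply, lmap_at_self]; rfl
    rw [e0]
    rw [D.rec_self i k j hk1 hj hj2, D.rec_other i k j hk1 hj hj2]
    have hc1 : ((Nat.lcm (D.m i false k) (D.m i true k) / D.m i (!i) k : ℕ) : ℚ) = (D.b i k : ℚ) := rfl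
    have hc2 : ((Nat.lcm (D.m i false k) (D.m i true k) : ℕ) : ℚ) = (D.dd i k : ℚ) := rfl
    rw [hc1, hc2, TT]
    set Q : ℕ := D.dd i k / D.m i i k with hQ
    push_cast
    linear_combination
      ((D.r i k : ℚ)*(D.lam i i k 1)*(D.lam i (!i) k (j+1))
        + ((D.dd i k : ℚ) - 1)*(D.s i k : ℚ)*(D.lam i i k 1))*hbM
      - ((D.r i k : ℚ)*(D.lam i i k 1)*(D.lam i (!i) k (j+1))
        + ((D.dd i k : ℚ) - 1)*(D.s i k : ℚ)*(D.lam i i k 1))*hq1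
      - (((D.dd i k : ℚ) - 1)*(D.b i k : ℚ)*(D.lam i i k 1))*hrs
      + ((Q : ℚ)*(D.r i k : ℚ)*(D.lam i (!i) k (j+1))
        + ((D.dd i k : ℚ) - 1)*(Q : ℚ)*(D.s i k : ℚ))*h4
      + (((D.dd i k : ℚ) - 1)*(D.b i k : ℚ)*(D.r i k : ℚ)*(D.lam i i k 1))*h5
  · refine ⟨((D.dd i k : ℤ) - 1) * D.n i (!i) k, ?_⟩
    have e0 : (lamv D i (k + 1) j - lmap (cc1 D i k) (cc2 D i k) (lamv D i k (j + 1))) (!i)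
        = D.lam i (!i) (k+1) j - (D.m i (!i) k : ℚ) * D.lam i (!i) k (j+1) := by
      rw [Pi.sub_apply, lmap_at_other]; rfl
    rw [e0, D.rec_other i k j hk1 hj hj2]
    have hc2 : ((Nat.lcm (D.m i false k) (D.m i true k) : ℕ) : ℚ) = (D.dd i k : ℚ) := rfl
    rw [hc2]
    push_cast
    linear_combination (((D.dd i k : ℚ) - 1))*h5
lemma lcm_io (D : QOData) (i : Bool) (k : ℕ) :
    Nat.lcm (D.m i i k) (D.m i (!i) k) = D.dd i k := by
  cases i <;> simp [QOData.dd, Nat.lcm_comm]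

lemma b_mul_gcd (D : QOData) (i : Bool) (k : ℕ) (hk : k ≤ D.e - 1) :
    D.b i k * Nat.gcd (D.m i i k) (D.m i (!i) k) = D.m i i k := by
  have h2 : 0 < D.m i (!i) k := D.m_pos i (!i) k hk
  apply Nat.eq_of_mul_eq_mul_right h2
  have h3 := Nat.gcd_mul_lcm (D.m i i k) (D.m i (!i) k)
  rw [lcm_io] at h3
  calc D.b i k * Nat.gcd (D.m i i k) (D.m i (!i) k) * D.m i (!i) k
      = Nat.gcd (D.m i i k) (D.m i (!i) k) * (D.b i k * D.m i (!i) k) := by ring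
    _ = Nat.gcd (D.m i i k) (D.m i (!i) k) * D.dd i k := by rw [b_mul_m]
    _ = D.m i i k * D.m i (!i) k := h3

lemma gcd_int (D : QOData) (i : Bool) (k : ℕ) (hk : k ≤ D.e - 1) :
    Int.gcd ((D.m i (!i) k : ℤ) * D.n i i k) (D.m i i k : ℤ) =
      Nat.gcd (D.m i i k) (D.m i (!i) k) := by
  have hcop : Nat.Coprime (D.n i i k).natAbs (D.m i i k) := by
    have := D.cop i i k hk
    simpa [Int.gcd] using this
  have h1 : Int.gcd ((D.m i (!i) k : ℤ) * D.n i i k) (D.m i i k : ℤ)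
      = Nat.gcd (D.m i (!i) k * (D.n i i k).natAbs) (D.m i i k) := by
    simp [Int.gcd, Int.natAbs_mul]
  rw [h1, Nat.Coprime.gcd_mul_right_cancel _ hcop, Nat.gcd_comm]

lemma ker_Fbar' (D : QOData) (i : Bool) (k : ℕ) (hk : k ≤ D.e - 1) :
    (Fbar D i k).ker = AddSubgroup.zmultiples (gg D i k 1) := by
  obtain ⟨hM1, hM2, hbM, hq1, hrs⟩ := casts D i k hk
  have h4 : (D.m i i k : ℚ) * D.lam i i k 1 = (D.n i i k : ℚ) := by
    rw [D.lead i i k hk]; field_simp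
  have h5 : (D.m i (!i) k : ℚ) * D.lam i (!i) k 1 = (D.n i (!i) k : ℚ) := by
    rw [D.lead i (!i) k hk]; field_simp
  have hbq : (D.b i k : ℚ) ≠ 0 := by
    intro h
    rw [h, zero_mul] at hbM
    have := dd_pos D i k hk
    have : (D.dd i k : ℚ) ≠ 0 := Nat.cast_ne_zero.mpr (by omega)
    exact this hbM.symm
  have hbg : (D.b i k : ℚ) * (Nat.gcd (D.m i i k) (D.m i (!i) k) : ℚ) = (D.m i i k : ℚ) := by
    exact_mod_cast congrArg (Nat.cast : ℕ → ℚ) (b_mul_gcd D i k hk)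
  set u : ℤ := Int.gcdA ((D.m i (!i) k : ℤ) * D.n i i k) (D.m i i k : ℤ) with hu
  set v : ℤ := Int.gcdB ((D.m i (!i) k : ℤ) * D.n i i k) (D.m i i k : ℤ) with hv
  have hguv : ((Nat.gcd (D.m i i k) (D.m i (!i) k) : ℤ) : ℚ) =
      ((D.m i (!i) k : ℚ) * (D.n i i k : ℚ)) * (u : ℚ) + (D.m i i k : ℚ) * (v : ℚ) := by
    have := Int.gcd_eq_gcd_ab ((D.m i (!i) k : ℤ) * D.n i i k) (D.m i i k : ℤ)
    rw [gcd_int D i k hk] at this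
    exact_mod_cast congrArg (Int.cast : ℤ → ℚ) this
  apply le_antisymm
  · intro w hw
    rw [AddMonoidHom.mem_ker] at hw
    obtain ⟨x, rfl⟩ := QuotientAddGroup.mk'_surjective Z2 w
    rw [show QuotientAddGroup.mk' Z2 x = pi x from rfl] at hw ⊢
    rw [Fbar_pi, pi_eq_zero_iff] at hw
    obtain ⟨A, hA⟩ := hw (!i)
    obtain ⟨C, hC⟩ := hw i
    rw [lmap_at_other] at hA
    rw [lmap_at_self, TT] at hC
    set Q : ℕ := D.dd i k / D.m i i k with hQ
    push_cast at hC
    have hq1' : (Q : ℚ) * (D.m i i k : ℚ) = (D.dd i k : ℚ) := hq1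
    set ctot : ℤ := -(A * D.r i k) + (D.m i (!i) k : ℤ) * (C * u) with hctot
    have hct : (ctot : ℚ) = -((A:ℚ) * (D.r i k : ℚ)) + (D.m i (!i) k : ℚ) * ((C:ℚ) * (u:ℚ)) := by
      rw [hctot]; push_cast; ring
    rw [AddSubgroup.mem_zmultiples_iff]
    refine ⟨ctot, ?_⟩
    rw [gg, ← map_zsmul pi ctot (lamv D i k 1)]
    refine pi_eq_iff.mpr (mem_Z2_of i _ ?_ ?_)
    · refine ⟨-(C * v), ?_⟩
      have e0 : (ctot • lamv D i k 1 - x) i = (ctot : ℚ) * D.lam i i k 1 - x i := by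
        simp [lamv, zsmul_eq_mul]
      rw [e0]
      apply mul_left_cancel₀ (mul_ne_zero hbq hM1)
      push_cast
      linear_combination (-(D.m i i k : ℚ))*hC + ((D.b i k : ℚ)*(D.r i k : ℚ)*(D.n i i k : ℚ))*hA
        + ((D.r i k : ℚ)*(D.n i i k : ℚ)*(x (!i)))*hq1'
        - ((D.r i k : ℚ)*(D.n i i k : ℚ)*(x (!i)))*hbM
        + ((D.b i k : ℚ)*(ctot : ℚ))*h4 + (C : ℚ)*hbg - ((D.b i k : ℚ)*(C : ℚ))*hguv
        + ((D.b i k : ℚ)*(D.n i i k : ℚ))*hct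
    · refine ⟨-(A * D.s i k) + (C * u) * D.n i (!i) k, ?_⟩
      have e0 : (ctot • lamv D i k 1 - x) (!i) = (ctot : ℚ) * D.lam i (!i) k 1 - x (!i) := by
        simp [lamv, zsmul_eq_mul]
      rw [e0]
      apply mul_left_cancel₀ hM2
      push_cast
      linear_combination (ctot : ℚ)*h5 - hA + (A : ℚ)*hrs + (D.n i (!i) k : ℚ)*hct
  · rw [AddSubgroup.zmultiples_le, AddMonoidHom.mem_ker]
    exact Fbar_g1_zero D i k hk
lemma Gr_map (D : QOData) (i : Bool) (k j : ℕ) (hk1 : k + 1 ≤ D.e - 1) (hj : 1 ≤ j)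
    (hj2 : j ≤ D.e - (k + 1)) :
    Gr D i (k + 1) j = (Gr D i k (j + 1)).map (Fbar D i k) := by
  rw [Gr, Gr, AddMonoidHom.map_closure]
  apply le_antisymm
  · rw [AddSubgroup.closure_le]
    rintro _ ⟨l, hl, rfl⟩
    simp only [Set.mem_Icc] at hl
    have h := gg_rec' D i k l hk1 hl.1 (le_trans hl.2 hj2)
    show gg D i (k + 1) l ∈ _
    rw [h]
    apply AddSubgroup.subset_closure
    exact ⟨gg D i k (l + 1), ⟨l + 1, ⟨by omega, by omega⟩, rfl⟩, rfl⟩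
  · rw [AddSubgroup.closure_le]
    rintro _ ⟨_, ⟨l, hl, rfl⟩, rfl⟩
    simp only [Set.mem_Icc] at hl
    rcases Nat.eq_or_lt_of_le hl.1 with h1 | h1
    · have h : Fbar D i k (gg D i k l) = 0 := by
        rw [← h1]; exact Fbar_g1_zero D i k (by omega)
      show Fbar D i k (gg D i k l) ∈ _
      rw [h]; exact zero_mem _
    · have h : Fbar D i k (gg D i k l) = gg D i (k + 1) (l - 1) := by
        have h2 := gg_rec' D i k (l - 1) hk1 (by omega) (by omega)
        rw [show l - 1 + 1 = l by omega] at h2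
        exact h2.symm
      show Fbar D i k (gg D i k l) ∈ _
      rw [h]
      exact AddSubgroup.subset_closure ⟨l - 1, ⟨by omega, by omega⟩, rfl⟩

lemma card_step (D : QOData) (i : Bool) (k j : ℕ) (hk1 : k + 1 ≤ D.e - 1) (hj : 1 ≤ j)
    (hj2 : j ≤ D.e - (k + 1)) :
    Nat.card (Gr D i k (j + 1)) = Nat.card (Gr D i (k + 1) j) * D.dd i k := by
  have hk : k ≤ D.e - 1 := by omega
  set H := Gr D i k (j + 1) with hH
  set φ := Fbar D i k with hφ
  set ψ := φ.comp H.subtype with hψ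
  have hcard := AddSubgroup.card_eq_card_quotient_mul_card_addSubgroup (ψ.ker)
  have hrange : ψ.range = H.map φ := by
    rw [hψ, AddMonoidHom.range_comp, AddSubgroup.range_subtype]
  have e1 : Nat.card (H ⧸ ψ.ker) = Nat.card (Gr D i (k + 1) j) := by
    rw [Gr_map D i k j hk1 hj hj2, ← hrange]
    exact Nat.card_congr (QuotientAddGroup.quotientKerEquivRange ψ).toEquiv
  have hg1H : gg D i k 1 ∈ H :=
    AddSubgroup.subset_closure ⟨1, ⟨le_refl 1, by omega⟩, rfl⟩
  have hker : ψ.ker = (AddSubgroup.zmultiples (gg D i k 1)).addSubgroupOf H := by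
    ext y
    rw [AddMonoidHom.mem_ker, AddSubgroup.mem_addSubgroupOf, ← ker_Fbar' D i k hk,
      AddMonoidHom.mem_ker]
    rfl
  have e2 : Nat.card ψ.ker = D.dd i k := by
    rw [hker,
      Nat.card_congr (AddSubgroup.addSubgroupOfEquivOfLe
        (AddSubgroup.zmultiples_le.mpr hg1H)).toEquiv,
      Nat.card_zmultiples, addOrderOf_gg D i k hk]
  rw [hcard, e1, e2]

lemma card_Gr_eq (D : QOData) : ∀ k, k ≤ D.e - 1 → ∀ j, 1 ≤ j → j ≤ D.e - k →
    Nat.card (Gr D false k j) = Nat.card (Gr D true k j) := by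
  intro k
  induction k with
  | zero =>
    intro _ j _ _
    have h : Gr D false 0 j = Gr D true 0 j := by
      rw [Gr, Gr]
      congr 1
      apply Set.image_congr
      intro l _
      rw [gg, gg]
      congr 1
      funext u
      show D.lam false u 0 l = D.lam true u 0 l
      rw [D.base false u l, D.base true u l]
    rw [h]
  | succ k ih =>
    intro hk1 j hj hj2
    have hk : k ≤ D.e - 1 := by omega
    have hdd : D.dd false k = D.dd true k := by
      rw [← card_Gr_one D false k hk, ← card_Gr_one D true k hk]
      exact ih hk 1 le_rfl (by omega)
    have h1 := card_step D false k j hk1 hj hj2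
    have h2 := card_step D true k j hk1 hj hj2
    have h3 := ih hk (j + 1) (by omega) (by omega)
    have hpos : 0 < D.dd false k := dd_pos D false k hk
    apply Nat.eq_of_mul_eq_mul_right hpos
    rw [← h1, h3, h2, hdd]

end BMAux

/-- For every `k = 0,…,e−1`: `b₁^{(k)}·m₂^{(k)}(1) = b₂^{(k)}·m₁^{(k)}(2)`. -/
theorem b_m_swap (D : QOData) (k : ℕ) (hk : k ≤ D.e - 1) :
    D.b false k * D.m false true k = D.b true k * D.m true false k := by
  have h1 : D.b false k * D.m false true k = D.dd false k := BMAux.b_mul_m D false k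
  have h2 : D.b true k * D.m true false k = D.dd true k := BMAux.b_mul_m D true k
  have he := D.he
  rw [h1, h2, ← BMAux.card_Gr_one D false k hk, ← BMAux.card_Gr_one D true k hk]
  exact BMAux.card_Gr_eq D k hk 1 le_rfl (by omega)
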